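/- arXiv:1211.0233 — 2 statements merged into one kernel-verified Lean document; each statement's English description precedes it below -/
import Mathlib

section
/- Let (E, λ) and (Y, ν) be measure spaces with 0 < λ(E) < ∞, let X = E × Y with product measure μ = λ × ν, and for each y ∈ Y let λ_y be the measure on X given by λ_y(U × {y}) = λ(U). Then for every p ≥ 1, the p-modulus of the family L = {λ_y : y ∈ Y} with respect to μ equals μ(X)/λ(E)^p = ν(Y)/λ(E)^{p-1}. -/
open MeasureTheory ENNReal

/-- The `p`-modulus of a family `L` of measures on `X` with respect to `μ`:
the infimum of `∫ ρ^p dμ` over all measurable `ρ : X → [0,∞]` with `∫ ρ dλ ≥ 1`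
for every `λ ∈ L`. -/
noncomputable def modFam {X : Type*} [MeasurableSpace X] (p : ℝ)
    (L : Set (Measure X)) (μ : Measure X) : ℝ≥0∞ :=
  ⨅ (ρ : X → ℝ≥0∞) (_ : Measurable ρ) (_ : ∀ lam ∈ L, 1 ≤ ∫⁻ x, ρ x ∂lam),
    ∫⁻ x, ρ x ^ p ∂μ

/-- Jensen-type bound on each fiber: if `∫ f ≥ 1` then `∫ f^p ≥ (λ(univ)^(p-1))⁻¹`. -/
lemma fiber_bound {α : Type*} [MeasurableSpace α] (lam : Measure α)
    (h0 : lam Set.univ ≠ 0) (hT : lam Set.univ ≠ ⊤)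
    (p : ℝ) (hp : 1 ≤ p) (f : α → ℝ≥0∞) (hf : Measurable f)
    (h1 : 1 ≤ ∫⁻ a, f a ∂lam) :
    (lam Set.univ ^ (p - 1))⁻¹ ≤ ∫⁻ a, f a ^ p ∂lam := by
  rcases eq_or_lt_of_le hp with hp1 | hp1
  · subst hp1
    simpa using h1
  · set q : ℝ := Real.conjExponent p
    have hpq : p.HolderConjugate q := Real.HolderConjugate.conjExponent hp1
    have hd : p / q = p - 1 := hpq.div_conj_eq_sub_one
    have hHolder := ENNReal.lintegral_mul_le_Lp_mul_Lq lam hpq hf.aemeasurable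
      (aemeasurable_const (b := (1 : ℝ≥0∞)))
    simp only [Pi.mul_apply, mul_one, ENNReal.one_rpow, lintegral_one] at hHolder
    have key : (1 : ℝ≥0∞) ≤ (∫⁻ a, f a ^ p ∂lam) ^ (1 / p) * lam Set.univ ^ (1 / q) :=
      h1.trans hHolder
    -- raise to the power p
    have key2 : (1 : ℝ≥0∞) ≤ (∫⁻ a, f a ^ p ∂lam) * lam Set.univ ^ (p - 1) := by
      have := ENNReal.rpow_le_rpow key hpq.nonneg
      rw [ENNReal.one_rpow, ENNReal.mul_rpow_of_nonneg _ _ hpq.nonneg,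
        ← ENNReal.rpow_mul, ← ENNReal.rpow_mul, one_div, inv_mul_cancel₀ hpq.ne_zero,
        ENNReal.rpow_one, one_div, inv_mul_eq_div, hd] at this
      exact this
    have hc0 : lam Set.univ ^ (p - 1) ≠ 0 := by
      simp [ENNReal.rpow_eq_zero_iff, h0, hT]
    have hcT : lam Set.univ ^ (p - 1) ≠ ⊤ := by
      simp only [ne_eq, ENNReal.rpow_eq_top_iff, not_or, not_and, not_lt]
      constructor
      · intro h; exact absurd h h0
      · intro h; exact absurd h hT
    calc (lam Set.univ ^ (p - 1))⁻¹ = 1 * (lam Set.univ ^ (p - 1))⁻¹ := (one_mul _).symm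
      _ ≤ ((∫⁻ a, f a ^ p ∂lam) * lam Set.univ ^ (p - 1)) * (lam Set.univ ^ (p - 1))⁻¹ :=
          mul_le_mul_left key2 _
      _ = ∫⁻ a, f a ^ p ∂lam := by
          rw [mul_assoc, ENNReal.mul_inv_cancel hc0 hcT, mul_one]

/-- Modulus of the family of horizontal fibers of a product measure:
`mod_p {λ_y : y ∈ Y} = μ(X)/λ(E)^p = ν(Y)/λ(E)^{p-1}`. -/
theorem product_modulus {E Y : Type*} [MeasurableSpace E] [MeasurableSpace Y]
    (lam : Measure E) (ν : Measure Y) [SigmaFinite lam] [SigmaFinite ν]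
    (hpos : 0 < lam Set.univ) (hfin : lam Set.univ < ⊤)
    (p : ℝ) (hp : 1 ≤ p) :
    modFam p {m : Measure (E × Y) | ∃ y : Y, m = Measure.map (fun e => (e, y)) lam}
        (lam.prod ν)
      = (lam.prod ν) Set.univ / (lam Set.univ) ^ p ∧
    (lam.prod ν) Set.univ / (lam Set.univ) ^ p
      = ν Set.univ / (lam Set.univ) ^ (p - 1) := by
  have h0 : lam Set.univ ≠ 0 := hpos.ne'
  have hT : lam Set.univ ≠ ⊤ := hfin.ne
  have hprod : (lam.prod ν) Set.univ = lam Set.univ * ν Set.univ := by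
    rw [← Set.univ_prod_univ, Measure.prod_prod]
  have hsplit : lam Set.univ ^ p = lam Set.univ * lam Set.univ ^ (p - 1) := by
    rw [show p = 1 + (p - 1) by ring, ENNReal.rpow_add _ _ h0 hT, ENNReal.rpow_one]
    ring_nf
  have heq2 : (lam.prod ν) Set.univ / (lam Set.univ) ^ p
      = ν Set.univ / (lam Set.univ) ^ (p - 1) := by
    rw [hprod, hsplit]
    exact ENNReal.mul_div_mul_left _ _ h0 hT
  refine ⟨?_, heq2⟩
  apply le_antisymm
  · -- upper bound: use the constant function (lam univ)⁻¹
    have hle : modFam p {m : Measure (E × Y) | ∃ y : Y, m = Measure.map (fun e => (e, y)) lam}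
        (lam.prod ν) ≤ ∫⁻ x, (fun _ : E × Y => (lam Set.univ)⁻¹) x ^ p ∂(lam.prod ν) := by
      refine iInf_le_of_le (fun _ => (lam Set.univ)⁻¹)
        (iInf_le_of_le measurable_const (iInf_le_of_le ?_ le_rfl))
      rintro m ⟨y, rfl⟩
      rw [lintegral_map measurable_const (measurable_prodMk_right), lintegral_const]
      exact le_of_eq (ENNReal.inv_mul_cancel h0 hT).symm
    refine hle.trans (le_of_eq ?_)
    rw [lintegral_const, ENNReal.inv_rpow, div_eq_mul_inv, mul_comm]
  · -- lower bound
    rw [heq2]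
    refine le_iInf fun ρ => le_iInf fun hρ => le_iInf fun hadm => ?_
    have hmeas : Measurable fun x : E × Y => ρ x ^ p := hρ.pow_const p
    rw [MeasureTheory.lintegral_prod_symm _ hmeas.aemeasurable]
    have hfib : ∀ y : Y, (lam Set.univ ^ (p - 1))⁻¹ ≤ ∫⁻ e, ρ (e, y) ^ p ∂lam := by
      intro y
      apply fiber_bound lam h0 hT p hp _ (hρ.comp measurable_prodMk_right)
      have := hadm (Measure.map (fun e => (e, y)) lam) ⟨y, rfl⟩
      rwa [lintegral_map hρ measurable_prodMk_right] at this
    calc ν Set.univ / lam Set.univ ^ (p - 1)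
        = ∫⁻ _, (lam Set.univ ^ (p - 1))⁻¹ ∂ν := by
          rw [lintegral_const, div_eq_mul_inv, mul_comm]
      _ ≤ ∫⁻ y, ∫⁻ e, ρ (e, y) ^ p ∂lam ∂ν := lintegral_mono fun y => hfib y
end

section
/- Let f : ℝᴺ → Y be a homeomorphism onto a metric space Y, E ⊂ ℝⁿ a closed set (viewed inside ℝᴺ = ℝⁿ × ℝ^{N-n}), and α ∈ (0, N). Then the set E_f(E, α) = {y ∈ ℝ^{N-n} : H^∞_α(f(E + y)) > 0} is a Borel subset of ℝ^{N-n}, where H^∞_α denotes the α-dimensional Hausdorff content. -/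
open MeasureTheory ENNReal NNReal Set

/-- The `α`-dimensional Hausdorff content of a set `A` in an extended metric
space: the infimum of `∑ rᵢ^α` over countable covers of `A` by balls `B(xᵢ,rᵢ)`
(with no bound on the radii). -/
noncomputable def hausdorffContent {Z : Type*} [EMetricSpace Z] (α : ℝ) (A : Set Z) : ℝ≥0∞ :=
  ⨅ (x : ℕ → Z) (r : ℕ → ℝ≥0∞) (_ : A ⊆ ⋃ n, EMetric.ball (x n) (r n)), ∑' n, r n ^ α

lemma hausdorffContent_mono {Z : Type*} [EMetricSpace Z] (α : ℝ) {A B : Set Z}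
    (h : A ⊆ B) : hausdorffContent α A ≤ hausdorffContent α B := by
  unfold hausdorffContent
  refine le_iInf fun x => le_iInf fun r => le_iInf fun hB => ?_
  exact iInf_le_of_le x (iInf_le_of_le r (iInf_le_of_le (h.trans hB) le_rfl))

lemma hausdorffContent_lt_iff {Z : Type*} [EMetricSpace Z] (α : ℝ) (A : Set Z) (ε : ℝ≥0∞) :
    hausdorffContent α A < ε ↔ ∃ x : ℕ → Z, ∃ r : ℕ → ℝ≥0∞,
      (A ⊆ ⋃ m, EMetric.ball (x m) (r m)) ∧ ∑' m, r m ^ α < ε := by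
  unfold hausdorffContent
  simp only [iInf_lt_iff]
  tauto

lemma hausdorffContent_iUnion_zero {Z : Type*} [EMetricSpace Z] (α : ℝ) (A : ℕ → Set Z)
    (h : ∀ m, hausdorffContent α (A m) = 0) :
    hausdorffContent α (⋃ m, A m) = 0 := by
  refine le_antisymm ?_ zero_le
  refine ENNReal.le_of_forall_pos_le_add fun ε hε _ => ?_
  rw [zero_add]
  have key : ∀ m : ℕ, ∃ x : ℕ → Z, ∃ r : ℕ → ℝ≥0∞,
      (A m ⊆ ⋃ i, EMetric.ball (x i) (r i)) ∧
      ∑' i, r i ^ α < (ε : ℝ≥0∞) * 2⁻¹ ^ (m + 1) := by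
    intro m
    rw [← hausdorffContent_lt_iff, h m]
    exact ENNReal.mul_pos (by exact_mod_cast hε.ne')
      (pow_ne_zero _ (ENNReal.inv_ne_zero.2 ENNReal.ofNat_ne_top))
  choose x r hcov hsum using key
  set e : ℕ ≃ ℕ × ℕ := (Denumerable.eqv (ℕ × ℕ)).symm with he
  have hle : hausdorffContent α (⋃ m, A m) ≤
      ∑' i, (r (e i).1 (e i).2) ^ α := by
    refine iInf_le_of_le (fun i => x (e i).1 (e i).2)
      (iInf_le_of_le (fun i => r (e i).1 (e i).2) (iInf_le_of_le ?_ le_rfl))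
    intro z hz
    rcases mem_iUnion.1 hz with ⟨m, hm⟩
    rcases mem_iUnion.1 (hcov m hm) with ⟨i, hi⟩
    refine mem_iUnion.2 ⟨e.symm (m, i), ?_⟩
    simpa using hi
  refine hle.trans ?_
  have h1 : ∑' i, (r (e i).1 (e i).2) ^ α = ∑' p : ℕ × ℕ, (r p.1 p.2) ^ α :=
    e.tsum_eq (fun p : ℕ × ℕ => (r p.1 p.2) ^ α)
  rw [h1, ENNReal.tsum_prod (f := fun m i => (r m i) ^ α)]
  have h2 : ∑' (m : ℕ), ∑' (i : ℕ), (r m i) ^ α ≤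
      ∑' m : ℕ, (ε : ℝ≥0∞) * 2⁻¹ ^ (m + 1) :=
    ENNReal.tsum_le_tsum fun m => (hsum m).le
  refine h2.trans ?_
  have h3 : ∑' m : ℕ, (ε : ℝ≥0∞) * 2⁻¹ ^ (m + 1) = (ε : ℝ≥0∞) * (2⁻¹ * (1 - 2⁻¹)⁻¹) :=
    calc ∑' m : ℕ, (ε : ℝ≥0∞) * 2⁻¹ ^ (m + 1)
        = (ε : ℝ≥0∞) * ∑' m : ℕ, (2⁻¹ : ℝ≥0∞) ^ (m + 1) := ENNReal.tsum_mul_left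
      _ = (ε : ℝ≥0∞) * ∑' m : ℕ, (2⁻¹ : ℝ≥0∞) * 2⁻¹ ^ m := by simp_rw [pow_succ']
      _ = (ε : ℝ≥0∞) * ((2⁻¹ : ℝ≥0∞) * ∑' m : ℕ, (2⁻¹ : ℝ≥0∞) ^ m) := by
          rw [ENNReal.tsum_mul_left]
      _ = (ε : ℝ≥0∞) * (2⁻¹ * (1 - 2⁻¹)⁻¹) := by rw [ENNReal.tsum_geometric]
  rw [h3]
  have : ((1 : ℝ≥0∞) - 2⁻¹)⁻¹ = 2 := by
    rw [ENNReal.one_sub_inv_two]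
    simp
  rw [this]
  rw [ENNReal.inv_mul_cancel (by norm_num) (by norm_num), mul_one]

lemma isOpen_sublevel {X W Y : Type*} [TopologicalSpace X] [TopologicalSpace W]
    [EMetricSpace Y] (f : X × W → Y) (hf : Continuous f)
    (α : ℝ) (K : Set X) (hK : IsCompact K) (ε : ℝ≥0∞) :
    IsOpen {y : W | hausdorffContent α (f '' (K ×ˢ ({y} : Set W))) < ε} := by
  rw [isOpen_iff_forall_mem_open]
  intro y hy
  rw [mem_setOf_eq, hausdorffContent_lt_iff] at hy
  obtain ⟨x, r, hcov, hsum⟩ := hy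
  set U : Set Y := ⋃ m, EMetric.ball (x m) (r m) with hU
  have hUopen : IsOpen U := isOpen_iUnion fun m => EMetric.isOpen_ball
  have hsub : K ×ˢ ({y} : Set W) ⊆ f ⁻¹' U := fun p hp => hcov ⟨p, hp, rfl⟩
  obtain ⟨u, v, hu, hv, hKu, hyv, huv⟩ :=
    generalized_tube_lemma hK isCompact_singleton (hUopen.preimage hf) hsub
  refine ⟨v, ?_, hv, hyv rfl⟩
  intro y' hy'
  rw [mem_setOf_eq, hausdorffContent_lt_iff]
  refine ⟨x, r, ?_, hsum⟩
  rintro z ⟨p, hp, rfl⟩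
  exact huv ⟨hKu hp.1, by rw [show p.2 = y' from hp.2]; exact hy'⟩

/-- For a homeomorphism `f : ℝᴺ → Y` (with `ℝᴺ = ℝⁿ × ℝ^{N-n}`), a closed set
`E ⊂ ℝⁿ` and `0 < α < N`, the set `{y : H^∞_α(f(E + y)) > 0}` is Borel. -/
theorem exceptional_set_borel {n k : ℕ} {Y : Type*} [MetricSpace Y]
    (f : (EuclideanSpace ℝ (Fin n) × EuclideanSpace ℝ (Fin k)) ≃ₜ Y)
    (E : Set (EuclideanSpace ℝ (Fin n))) (hE : IsClosed E)
    (α : ℝ) (hα0 : 0 < α) (hαN : α < n + k) :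
    MeasurableSet {y : EuclideanSpace ℝ (Fin k) |
      0 < hausdorffContent α (f '' (E ×ˢ ({y} : Set (EuclideanSpace ℝ (Fin k)))))} := by
  set K : ℕ → Set (EuclideanSpace ℝ (Fin n)) := fun m => E ∩ Metric.closedBall 0 m with hK
  have hKcpt : ∀ m, IsCompact (K m) := fun m =>
    ((isCompact_closedBall (0 : EuclideanSpace ℝ (Fin n)) m).inter_left hE)
  have hEU : E = ⋃ m, K m := by
    ext z
    simp only [hK, mem_iUnion, mem_inter_iff, Metric.mem_closedBall, dist_zero_right]
    constructor
    · intro hz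
      exact ⟨⌈‖z‖⌉₊, hz, (Nat.le_ceil _)⟩
    · rintro ⟨m, hz, -⟩
      exact hz
  have hset : {y : EuclideanSpace ℝ (Fin k) |
      0 < hausdorffContent α (f '' (E ×ˢ ({y} : Set (EuclideanSpace ℝ (Fin k)))))} =
      ⋃ m, {y : EuclideanSpace ℝ (Fin k) |
        0 < hausdorffContent α (f '' (K m ×ˢ ({y} : Set (EuclideanSpace ℝ (Fin k)))))} := by
    ext y
    simp only [mem_setOf_eq, mem_iUnion]
    constructor
    · intro hy
      by_contra hall
      push_neg at hall
      simp only [not_lt, nonpos_iff_eq_zero] at hall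
      have : f '' (E ×ˢ ({y} : Set (EuclideanSpace ℝ (Fin k)))) =
          ⋃ m, f '' (K m ×ˢ ({y} : Set (EuclideanSpace ℝ (Fin k)))) := by
        rw [hEU, iUnion_prod_const, image_iUnion]
      rw [this, hausdorffContent_iUnion_zero α _ hall] at hy
      exact lt_irrefl _ hy
    · rintro ⟨m, hm⟩
      exact hm.trans_le (hausdorffContent_mono α
        (image_mono (prod_mono_left inter_subset_left)))
  rw [hset]
  refine MeasurableSet.iUnion fun m => ?_
  have hz : {y : EuclideanSpace ℝ (Fin k) |
      0 < hausdorffContent α (f '' (K m ×ˢ ({y} : Set (EuclideanSpace ℝ (Fin k)))))} =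
      (⋂ j : ℕ, {y : EuclideanSpace ℝ (Fin k) |
        hausdorffContent α (f '' (K m ×ˢ ({y} : Set (EuclideanSpace ℝ (Fin k))))) <
          (j : ℝ≥0∞)⁻¹})ᶜ := by
    ext y
    simp only [mem_setOf_eq, mem_compl_iff, mem_iInter, not_forall, not_lt]
    constructor
    · intro hy
      obtain ⟨j, hj⟩ := ENNReal.exists_inv_nat_lt hy.ne'
      exact ⟨j, hj.le⟩
    · rintro ⟨j, hj⟩
      refine lt_of_lt_of_le ?_ hj
      exact ENNReal.inv_pos.2 (ENNReal.natCast_ne_top j)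
  rw [hz]
  refine (MeasurableSet.iInter fun j => ?_).compl
  exact (isOpen_sublevel f f.continuous α (K m) (hKcpt m) _).measurableSet
end
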